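/- Let N be the m×m matrix over ℚ(t) with N_{ii} = 1, N_{i+1,i} = 1/(1-t), N_{ij} = 1 for j > i, and N_{ij} = 0 for j < i - 1. Then det N = (-t/(1-t))^{m-1}. -/

import Mathlib

open Finset Polynomial

noncomputable section

def tq : RatFunc ℚ := RatFunc.X

lemma one_sub_tq_ne : (1 : RatFunc ℚ) - tq ≠ 0 := by
  have h : tq ≠ 1 := by
    intro h
    have := RatFunc.algebraMap_injective ℚ
      (show (algebraMap ℚ[X] (RatFunc ℚ)) Polynomial.X = algebraMap ℚ[X] (RatFunc ℚ) 1 by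
        simpa [tq, RatFunc.algebraMap_X] using h)
    have h2 : (Polynomial.X : ℚ[X]) = Polynomial.C 1 := by simpa using this
    exact Polynomial.X_ne_C 1 h2
  exact sub_ne_zero.mpr (Ne.symm h)

def Qmat (n : ℕ) : Matrix (Fin n) (Fin n) (RatFunc ℚ) :=
  Matrix.of fun i j => if (i : ℕ) ≤ (j : ℕ) then 1
    else if (i : ℕ) = (j : ℕ) + 1 then (1 - tq)⁻¹ else 0

lemma detQ : ∀ n : ℕ, (Qmat (n + 1)).det = (-tq / (1 - tq)) ^ n := by
  intro n
  induction n with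
  | zero => simp [Qmat, Matrix.det_fin_one]
  | succ n ih =>
    rw [Matrix.det_succ_column_zero, Fin.sum_univ_succ, Fin.sum_univ_succ]
    have hsub0 : (Qmat (n + 2)).submatrix (Fin.succAbove 0) Fin.succ = Qmat (n + 1) := by
      ext i j
      simp [Qmat, Matrix.submatrix, Fin.succAbove, Nat.succ_le_succ_iff]
    have hsub1 : (Qmat (n + 2)).submatrix (Fin.succ (0:Fin (n+1))).succAbove Fin.succ = Qmat (n + 1) := by
      ext i j
      rcases Fin.eq_zero_or_eq_succ i with rfl | ⟨i', rfl⟩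
      · simp [Qmat, Matrix.submatrix, Fin.succAbove]
      · have : (Fin.succAbove 1 i'.succ : Fin (n+2)) = i'.succ.succ := by
          simp [Fin.succAbove, Fin.lt_def]
        simp [Qmat, Matrix.submatrix, this, Nat.succ_le_succ_iff]
    have hz : ∀ i : Fin n, Qmat (n + 2) i.succ.succ 0 = 0 := by
      intro i
      simp only [Qmat, Matrix.of_apply, Fin.val_succ, Fin.val_zero]
      norm_num
    rw [hsub0, hsub1]
    have h00 : Qmat (n + 2) 0 0 = 1 := by simp [Qmat]
    have h10 : Qmat (n + 2) (Fin.succ 0) 0 = (1 - tq)⁻¹ := by simp [Qmat]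
    rw [h00, h10]
    rw [Finset.sum_eq_zero (by intro i _; rw [hz i]; ring)]
    rw [ih]
    rw [show ((-tq / (1 - tq)) ^ (n+1) : RatFunc ℚ) = (-tq / (1 - tq)) * (-tq / (1 - tq)) ^ n from pow_succ' _ _]
    field_simp [one_sub_tq_ne]
    simp only [Fin.val_zero, Fin.val_succ, zero_add]
    ring

theorem det_quasi_upper_triangular (m : ℕ) (hm : 1 ≤ m)
    (N : Matrix (Fin m) (Fin m) (RatFunc ℚ))
    (hN : ∀ i j : Fin m,
      N i j = if (i : ℕ) ≤ (j : ℕ) then 1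
        else if (i : ℕ) = (j : ℕ) + 1 then (1 - tq)⁻¹ else 0) :
    N.det = (-tq / (1 - tq)) ^ (m - 1) := by
  obtain ⟨n, rfl⟩ : ∃ n, m = n + 1 := ⟨m - 1, by omega⟩
  have : N = Qmat (n + 1) := by
    ext i j; rw [hN i j]; rfl
  rw [this, detQ]
  simp

end
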